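/- Let H be a complex Hilbert space, S an isometry on H (S*S = 1), q ∈ (0,1), and T = Σ_{n=0}^∞ qⁿ Sⁿ(S*)ⁿ (converging in norm). Then the operator A = S·T^{1/2} satisfies the q-CCR relation A*A = 1 + q·A·A*. -/

import Mathlib

open ContinuousLinearMap
set_option maxHeartbeats 2000000
set_option synthInstance.maxHeartbeats 400000

theorem stmt_7 {H : Type*} [NormedAddCommGroup H] [InnerProductSpace ℂ H]
    [CompleteSpace H] (q : ℝ) (hq0 : 0 < q) (hq1 : q < 1)
    (S : H →L[ℂ] H) (hS : adjoint S * S = 1)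
    (T : H →L[ℂ] H) (hT : T = ∑' n : ℕ, q ^ n • (S ^ n * (adjoint S) ^ n))
    (A : H →L[ℂ] H) (hA : A = S * cfc Real.sqrt T) :
    adjoint A * A = 1 + q • (A * adjoint A) := by
  have hstar : adjoint S = star S := (star_eq_adjoint S).symm
  rw [hstar] at hS hT
  have hpow1 : ∀ (B : H →L[ℂ] H), ‖B‖ ≤ 1 → ∀ n : ℕ, ‖B ^ n‖ ≤ 1 := by
    intro B hB n
    induction n with
    | zero => simpa [ContinuousLinearMap.one_def] using norm_id_le
    | succ n ih =>
      rw [pow_succ]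
      calc ‖B ^ n * B‖ ≤ ‖B ^ n‖ * ‖B‖ := norm_mul_le _ _
        _ ≤ 1 := by nlinarith [norm_nonneg (B ^ n), norm_nonneg B]
  have hS1 : ‖S‖ ≤ 1 := by
    have h1 : ‖star S * S‖ = ‖S‖ * ‖S‖ := CStarRing.norm_star_mul_self
    rw [hS] at h1
    have h2 : ‖(1 : H →L[ℂ] H)‖ ≤ 1 := by
      rw [ContinuousLinearMap.one_def]; exact norm_id_le
    nlinarith [norm_nonneg S]
  have hbound : ∀ n : ℕ, ‖q ^ n • (S ^ n * (star S) ^ n)‖ ≤ q ^ n := by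
    intro n
    have h2 : ‖S ^ n * (star S) ^ n‖ ≤ 1 := by
      calc ‖S ^ n * (star S) ^ n‖ ≤ ‖S ^ n‖ * ‖(star S) ^ n‖ := norm_mul_le _ _
        _ ≤ 1 * 1 := by
            gcongr
            · exact hpow1 S hS1 n
            · exact hpow1 (star S) (by rwa [norm_star]) n
        _ = 1 := one_mul 1
    calc ‖q ^ n • (S ^ n * (star S) ^ n)‖ = |q ^ n| * ‖S ^ n * (star S) ^ n‖ := norm_smul _ _
      _ = q ^ n * ‖S ^ n * (star S) ^ n‖ := by rw [abs_of_nonneg (pow_nonneg hq0.le n)]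
      _ ≤ q ^ n * 1 := by gcongr
      _ = q ^ n := mul_one _
  have hsum : Summable (fun n : ℕ => q ^ n • (S ^ n * (star S) ^ n)) :=
    Summable.of_norm_bounded (summable_geometric_of_lt_one hq0.le hq1) hbound
  -- positivity of T
  have hTnn : (0 : H →L[ℂ] H) ≤ T := by
    rw [hT]
    refine tsum_nonneg fun n => ?_
    have key : q ^ n • (S ^ n * (star S) ^ n)
        = (Real.sqrt (q ^ n) • S ^ n) * star (Real.sqrt (q ^ n) • S ^ n) := by
      rw [star_smul, star_pow, smul_mul_assoc, mul_smul_comm, smul_smul]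
      norm_num
      rw [Real.mul_self_sqrt (pow_nonneg hq0.le n)]
    rw [key]
    exact mul_star_self_nonneg _
  have hTsa : IsSelfAdjoint T := .of_nonneg hTnn
  -- key identity T = 1 + q • (S * T * S*)
  have hkey : T = 1 + q • (S * T * star S) := by
    conv_lhs => rw [hT, hsum.tsum_eq_zero_add]
    congr 1
    · simp
    · have step : ∀ n : ℕ, q ^ (n + 1) • (S ^ (n + 1) * (star S) ^ (n + 1))
          = q • (S * (q ^ n • (S ^ n * (star S) ^ n)) * star S) := by
        intro n
        rw [show q ^ (n + 1) = q * q ^ n from by ring, pow_succ' S, pow_succ (star S)]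
        rw [mul_smul_comm (q ^ n) S, smul_mul_assoc (q ^ n), smul_smul]
        simp only [mul_assoc]
      simp only [step]
      rw [Summable.tsum_const_smul _ ((hsum.mul_left S).mul_right (star S))]
      congr 1
      rw [(hsum.mul_left S).tsum_mul_right (star S), hsum.tsum_mul_left S, ← hT]
  -- square root facts
  have hCsa : IsSelfAdjoint (cfc Real.sqrt T) := cfc_predicate _ T
  have hsq : cfc Real.sqrt T * cfc Real.sqrt T = T := by
    rw [← cfc_mul Real.sqrt Real.sqrt T]
    conv_rhs => rw [← cfc_id' ℝ T]
    exact cfc_congr fun x hx => Real.mul_self_sqrt (spectrum_nonneg_of_nonneg hTnn hx)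
  set C := cfc Real.sqrt T with hC
  rw [hA, ← star_eq_adjoint, star_mul, hCsa.star_eq]
  calc C * star S * (S * C) = C * (star S * S) * C := by noncomm_ring
    _ = T := by rw [hS, mul_one, hsq]
    _ = 1 + q • (S * C * (C * star S)) := by
        rw [hkey]
        congr 2
        calc S * T * star S = S * (C * C) * star S := by rw [hsq]
          _ = S * C * (C * star S) := by noncomm_ring
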